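/- Every conformal biderivation of the Virasoro Lie conformal algebra Vir = C[∂]L is inner: if φ is a conformal biderivation of Vir, then there exists t ∈ C such that φ_λ(x,y) = t·[x_λ y] for all x, y ∈ Vir. -/

import Mathlib

/- Framework: a Lie conformal algebra over ℂ is a ℂ[∂]-module `R` (given by a ℂ-module
with a ℂ-linear operator `D` for the action of `∂`) with a λ-bracket `B : R → R → R[λ]`.
We model `R[λ]` as `ℕ →₀ R` (coefficient of `λ^n` at index `n`) and `R[λ,μ,γ]` as an
iterated Finsupp.  Substitutions of the bracket variable are implemented by evaluating
the polynomial at a commuting operator (e.g. multiplication by `λ`, by `λ+μ`, or by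
`-∂-λ`), and brackets/biderivations are extended to polynomial-valued arguments by
ℂ[λ,μ,γ]-bilinearity. -/

namespace ConfBider

variable {R : Type} [AddCommGroup R] [Module ℂ R]

/-- `R[λ]`. -/
abbrev Pol1 (R : Type) [AddCommGroup R] : Type := ℕ →₀ R

/-- `R[λ,μ,γ]`: index `a` is the exponent of `λ`, then `μ`, then `γ`. -/
abbrev Pol3 (R : Type) [AddCommGroup R] : Type := ℕ →₀ (ℕ →₀ (ℕ →₀ R))

/-- Multiplication by the variable on `R[λ]`. -/
noncomputable def shift1 : Pol1 R → Pol1 R := Finsupp.mapDomain (· + 1)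

/-- The action of `∂` on coefficients of `R[λ]`. -/
noncomputable def D1 (D : R →ₗ[ℂ] R) : Pol1 R → Pol1 R := Finsupp.mapRange D (map_zero D)

/-- The operator "multiplication by `-∂-λ`" on `R[λ]`. -/
noncomputable def subNeg (D : R →ₗ[ℂ] R) : Pol1 R → Pol1 R := fun z => -(D1 D z) - shift1 z

/-- Evaluation of `f ∈ R[ν]` at the operator `e` (substitution `ν ↦ e`), inside `R[λ]`. -/
noncomputable def ev1 (f : Pol1 R) (e : Pol1 R → Pol1 R) : Pol1 R :=
  f.sum fun n r => e^[n] (Finsupp.single 0 r)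

/-- Constants `R → R[λ,μ,γ]`. -/
noncomputable def iota3 : R → Pol3 R := fun r => Finsupp.single 0 (Finsupp.single 0 (Finsupp.single 0 r))

/-- Multiplication by `λ` on `R[λ,μ,γ]`. -/
noncomputable def Xl : Pol3 R → Pol3 R := Finsupp.mapDomain (· + 1)

/-- Multiplication by `μ` on `R[λ,μ,γ]`. -/
noncomputable def Xm : Pol3 R → Pol3 R :=
  Finsupp.mapRange (Finsupp.mapDomain (· + 1)) Finsupp.mapDomain_zero

/-- Multiplication by `γ` on `R[λ,μ,γ]`. -/
noncomputable def Xg : Pol3 R → Pol3 R :=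
  Finsupp.mapRange (Finsupp.mapRange (Finsupp.mapDomain (· + 1)) Finsupp.mapDomain_zero)
    Finsupp.mapRange_zero

/-- Multiplication by `λ+μ` on `R[λ,μ,γ]`. -/
noncomputable def eLM : Pol3 R → Pol3 R := fun z => Xl z + Xm z

/-- Multiplication by `μ+γ` on `R[λ,μ,γ]`. -/
noncomputable def eMG : Pol3 R → Pol3 R := fun z => Xm z + Xg z

/-- Evaluation of `f ∈ R[ν]` at the operator `e` (substitution `ν ↦ e`), in `R[λ,μ,γ]`. -/
noncomputable def ev (f : Pol1 R) (e : Pol3 R → Pol3 R) : Pol3 R := f.sum fun n r => e^[n] (iota3 r)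

/-- Extension of an `R`-argument operation `F` to a polynomial argument in `R[λ,μ,γ]`,
by ℂ[λ,μ,γ]-linearity. -/
noncomputable def lift3 (F : R → Pol3 R) : Pol3 R → Pol3 R := fun w =>
  w.sum fun a fa => fa.sum fun b fb => fb.sum fun c r => Xl^[a] (Xm^[b] (Xg^[c] (F r)))

/-- `φ : R × R → R[λ]` is a conformal bilinear map: ℂ-bilinear with
`φ_λ(∂x,y) = -λ φ_λ(x,y)` and `φ_λ(x,∂y) = (∂+λ) φ_λ(x,y)`. -/
structure IsConfBilinear (D : R →ₗ[ℂ] R) (φ : R → R → Pol1 R) : Prop where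
  add_left : ∀ x x' y, φ (x + x') y = φ x y + φ x' y
  add_right : ∀ x y y', φ x (y + y') = φ x y + φ x y'
  smul_left : ∀ (c : ℂ) x y, φ (c • x) y = c • φ x y
  smul_right : ∀ (c : ℂ) x y, φ x (c • y) = c • φ x y
  d_left : ∀ x y, φ (D x) y = -(shift1 (φ x y))
  d_right : ∀ x y, φ x (D y) = D1 D (φ x y) + shift1 (φ x y)

/-- Skew-symmetry `φ_λ(x,y) = -φ_{-∂-λ}(y,x)`. -/
noncomputable def IsSkew (D : R →ₗ[ℂ] R) (φ : R → R → Pol1 R) : Prop :=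
  ∀ x y, φ x y = -(ev1 (φ y x) (subNeg D))

/-- A Lie conformal algebra structure: conformal sesquilinearity, skew-symmetry and
the Jacobi identity `[x_λ[y_μ z]] = [[x_λ y]_{λ+μ} z] + [y_μ[x_λ z]]`. -/
structure IsLieConformal (D : R →ₗ[ℂ] R) (B : R → R → Pol1 R) : Prop where
  bilin : IsConfBilinear D B
  skew : IsSkew D B
  jacobi : ∀ x y z,
    lift3 (fun r => ev (B x r) Xl) (ev (B y z) Xm)
      = lift3 (fun r => ev (B r z) eLM) (ev (B x y) Xl)
        + lift3 (fun r => ev (B y r) Xm) (ev (B x z) Xl)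

/-- A conformal biderivation of a Lie conformal algebra `(R, D, B)`: a skew-symmetric
conformal bilinear map `φ` with `φ_λ(x,[y_μ z]) = [(φ_λ(x,y))_{λ+μ} z] + [y_μ φ_λ(x,z)]`. -/
structure IsConfBiderivation (D : R →ₗ[ℂ] R) (B : R → R → Pol1 R)
    (φ : R → R → Pol1 R) : Prop where
  bilin : IsConfBilinear D φ
  skew : IsSkew D φ
  leibniz : ∀ x y z,
    lift3 (fun r => ev (φ x r) Xl) (ev (B y z) Xm)
      = lift3 (fun r => ev (B r z) eLM) (ev (φ x y) Xl)
        + lift3 (fun r => ev (B y r) Xm) (ev (φ x z) Xl)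


/-- Coefficient finsupp of a polynomial. -/
noncomputable def toF {S : Type} [Semiring S] (p : Polynomial S) : ℕ →₀ S :=
  Finsupp.onFinset p.support (fun n => p.coeff n) (fun n h => Polynomial.mem_support_iff.mpr h)

/-- The Virasoro conformal algebra: `Vir = ℂ[∂]L`, identified with `ℂ[∂]` via `p(∂)L ↦ p`. -/
abbrev VirR : Type := Polynomial ℂ

/-- The action of `∂` on `Vir` (multiplication by the variable). -/
noncomputable def DVir : VirR →ₗ[ℂ] VirR := LinearMap.mulLeft ℂ (Polynomial.X : Polynomial ℂ)

/-- `ℂ → ℂ[∂][λ]` (constants). -/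
noncomputable def cc : ℂ →+* Polynomial (Polynomial ℂ) := Polynomial.C.comp Polynomial.C

/-- `∂` inside `ℂ[∂][λ]`. -/
noncomputable def vpd : Polynomial (Polynomial ℂ) := Polynomial.C Polynomial.X

/-- `λ` inside `ℂ[∂][λ]`. -/
noncomputable def vpl : Polynomial (Polynomial ℂ) := Polynomial.X

/-- The λ-bracket of `Vir`, determined by `[L_λ L] = (∂+2λ)L` and conformal
sesquilinearity: `[p(∂)L _λ q(∂)L] = p(-λ) q(∂+λ) (∂+2λ) L`. -/
noncomputable def BVir (p q : VirR) : Pol1 VirR :=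
  toF ((p.eval₂ cc (-vpl)) * (q.eval₂ cc (vpd + vpl)) * (vpd + 2 * vpl))



/-! ### Auxiliary infrastructure -/

open Polynomial

noncomputable def toP {S : Type} [Semiring S] (g : ℕ →₀ S) : Polynomial S := ⟨AddMonoidAlgebra.ofCoeff g⟩

@[simp] lemma toP_coeff {S : Type} [Semiring S] (g : ℕ →₀ S) (n : ℕ) : (toP g).coeff n = g n := rfl

lemma toP_injective {S : Type} [Semiring S] : Function.Injective (toP (S := S)) := by
  intro a b h; ext n; exact congrArg (fun p => Polynomial.coeff p n) h

@[simp] lemma toP_zero {S : Type} [Semiring S] : toP (0 : ℕ →₀ S) = 0 := by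
  ext n; simp

@[simp] lemma toP_add {S : Type} [Semiring S] (a b : ℕ →₀ S) : toP (a + b) = toP a + toP b := by
  ext n; simp

@[simp] lemma toP_neg {S : Type} [Ring S] (a : ℕ →₀ S) : toP (-a) = -toP a := by
  ext n; simp

@[simp] lemma toP_sub {S : Type} [Ring S] (a b : ℕ →₀ S) : toP (a - b) = toP a - toP b := by
  ext n; simp

noncomputable def toPAM {S : Type} [Semiring S] : (ℕ →₀ S) →+ Polynomial S :=
  { toFun := toP, map_zero' := toP_zero, map_add' := toP_add }

@[simp] lemma toPAM_apply {S : Type} [Semiring S] (g : ℕ →₀ S) : toPAM g = toP g := rfl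

@[simp] lemma toP_single {S : Type} [Semiring S] (n : ℕ) (r : S) :
    toP (Finsupp.single n r) = Polynomial.monomial n r := by
  ext m; simp [Polynomial.coeff_monomial, Finsupp.single_apply]

lemma toP_sum_eq {S : Type} [Semiring S] {N : Type} [AddCommMonoid N] (g : ℕ →₀ S)
    (k : ℕ → S → N) : (toP g).sum k = g.sum k := rfl

lemma mapD_zero_apply {T : Type} [AddCommMonoid T] (g : ℕ →₀ T) :
    Finsupp.mapDomain (· + 1) g 0 = 0 :=
  Finsupp.mapDomain_notin_range _ _ (by simp)

lemma mapD_succ_apply {T : Type} [AddCommMonoid T] (g : ℕ →₀ T) (n : ℕ) :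
    Finsupp.mapDomain (· + 1) g (n + 1) = g n :=
  Finsupp.mapDomain_apply (add_left_injective 1) g n

lemma toP_mapD {S : Type} [Semiring S] (g : ℕ →₀ S) :
    toP (Finsupp.mapDomain (· + 1) g) = Polynomial.X * toP g := by
  ext m
  cases m with
  | zero => simp [mapD_zero_apply, Polynomial.mul_coeff_zero]
  | succ n => simp [mapD_succ_apply, Polynomial.coeff_X_mul]

lemma toP_toF {S : Type} [Semiring S] (p : Polynomial S) : toP (toF p) = p := by
  ext n; simp [toF]

@[simp] lemma DVir_apply (p : VirR) : DVir p = Polynomial.X * p := rfl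

lemma toP_shift1 (g : Pol1 VirR) : toP (shift1 g) = Polynomial.X * toP g := toP_mapD g

lemma toP_D1 (g : Pol1 VirR) : toP (D1 DVir g) = Polynomial.C Polynomial.X * toP g := by
  ext n; simp [D1, Polynomial.coeff_C_mul]

lemma toP_smulC (c : ℂ) (g : Pol1 VirR) :
    toP (c • g) = Polynomial.C (Polynomial.C c) * toP g := by
  ext n
  simp [Polynomial.coeff_C_mul, Polynomial.smul_eq_C_mul]

lemma toP_BVir (p q : VirR) :
    toP (BVir p q) = (p.eval₂ cc (-vpl)) * (q.eval₂ cc (vpd + vpl)) * (vpd + 2 * vpl) := by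
  unfold BVir; exact toP_toF _


/-! ### Iteration helpers -/

lemma iter_zero' {α : Type} [Zero α] {e : α → α} (h : e 0 = 0) : ∀ n, e^[n] (0 : α) = 0 := by
  intro n; induction n with
  | zero => rfl
  | succ m ih => rw [Function.iterate_succ_apply', ih, h]

lemma iter_add' {α : Type} [Add α] {e : α → α} (h : ∀ a b, e (a + b) = e a + e b) :
    ∀ n (a b : α), e^[n] (a + b) = e^[n] a + e^[n] b := by
  intro n; induction n with
  | zero => intro a b; rfl
  | succ m ih => intro a b; rw [Function.iterate_succ_apply', ih, h,
      Function.iterate_succ_apply', Function.iterate_succ_apply']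

/-! ### Operator facts on `Pol3 VirR` -/

lemma Xl_zero : Xl (0 : Pol3 VirR) = 0 := Finsupp.mapDomain_zero
lemma Xm_zero : Xm (0 : Pol3 VirR) = 0 := Finsupp.mapRange_zero
lemma Xg_zero : Xg (0 : Pol3 VirR) = 0 := Finsupp.mapRange_zero

lemma Xl_add (a b : Pol3 VirR) : Xl (a + b) = Xl a + Xl b := Finsupp.mapDomain_add
lemma Xm_add (a b : Pol3 VirR) : Xm (a + b) = Xm a + Xm b :=
  Finsupp.mapRange_add (fun x y => Finsupp.mapDomain_add) a b
lemma Xg_add (a b : Pol3 VirR) : Xg (a + b) = Xg a + Xg b :=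
  Finsupp.mapRange_add (fun x y => Finsupp.mapRange_add (fun u v => Finsupp.mapDomain_add) x y) a b

@[simp] lemma iota3_zero : iota3 (0 : VirR) = 0 := by simp [iota3]

lemma ev_zero (e : Pol3 VirR → Pol3 VirR) : ev (0 : Pol1 VirR) e = 0 :=
  Finsupp.sum_zero_index

lemma ev_single {e : Pol3 VirR → Pol3 VirR} (h0 : e 0 = 0) (n : ℕ) (r : VirR) :
    ev (Finsupp.single n r) e = e^[n] (iota3 r) :=
  Finsupp.sum_single_index (by simp [iter_zero' h0])

lemma ev_add {e : Pol3 VirR → Pol3 VirR} (h0 : e 0 = 0)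
    (hadd : ∀ a b, e (a + b) = e a + e b) (g g' : Pol1 VirR) :
    ev (g + g') e = ev g e + ev g' e :=
  Finsupp.sum_add_index' (fun a => by simp [iter_zero' h0])
    (fun a b₁ b₂ => by
      have : iota3 (b₁ + b₂) = iota3 b₁ + iota3 b₂ := by
        simp [iota3, Finsupp.single_add]
      rw [this, iter_add' hadd])

/-! ### `ev`/`lift3` structure lemmas -/

lemma sum_single_eq_mapRange {T U : Type} [AddCommMonoid T] [AddCommMonoid U]
    (j : T → U) (hj : j 0 = 0) (g : ℕ →₀ T) :
    (g.sum fun n r => Finsupp.single n (j r)) = Finsupp.mapRange j hj g := by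
  ext m
  rw [Finsupp.sum_apply, Finsupp.mapRange_apply]
  rw [Finsupp.sum]
  have : ∀ n ∈ g.support, (Finsupp.single n (j (g n))) m
      = if n = m then j (g n) else 0 := by
    intro n _; rw [Finsupp.single_apply]
  rw [Finset.sum_congr rfl this, Finset.sum_ite_eq' g.support m (fun n => j (g n))]
  by_cases hm : m ∈ g.support
  · simp [hm]
  · simp [hm, Finsupp.notMem_support_iff.mp hm, hj]

lemma Xl_iter_iota (n : ℕ) (r : VirR) :
    Xl^[n] (iota3 r) = Finsupp.single n (Finsupp.single 0 (Finsupp.single 0 r)) := by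
  induction n with
  | zero => rfl
  | succ m ih =>
      rw [Function.iterate_succ_apply', ih]
      show Finsupp.mapDomain (· + 1) _ = _
      rw [Finsupp.mapDomain_single]

lemma Xm_iter_iota (n : ℕ) (r : VirR) :
    Xm^[n] (iota3 r) = Finsupp.single 0 (Finsupp.single n (Finsupp.single 0 r)) := by
  induction n with
  | zero => rfl
  | succ m ih =>
      rw [Function.iterate_succ_apply', ih]
      show Finsupp.mapRange _ _ _ = _
      rw [Finsupp.mapRange_single, Finsupp.mapDomain_single]

lemma ev_Xl_eq (g : Pol1 VirR) :
    ev g Xl = Finsupp.mapRange (fun r => Finsupp.single 0 (Finsupp.single 0 (r : VirR)))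
      (by simp) g := by
  unfold ev
  simp_rw [Xl_iter_iota]
  exact sum_single_eq_mapRange (fun r => Finsupp.single 0 (Finsupp.single 0 (r : VirR))) (by simp) g

lemma ev_Xm_eq (g : Pol1 VirR) :
    ev g Xm = Finsupp.single 0
      (Finsupp.mapRange (fun r => Finsupp.single 0 (r : VirR)) (by simp) g) := by
  unfold ev
  simp_rw [Xm_iter_iota]
  rw [← sum_single_eq_mapRange (fun r => Finsupp.single 0 (r : VirR)) (by simp) g]
  exact (map_finsuppSum (Finsupp.singleAddHom 0) g
    (fun n r => Finsupp.single n (Finsupp.single 0 r))).symm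

lemma lift3_ev_Xl (F : VirR → Pol3 VirR) (hF0 : F 0 = 0) (g : Pol1 VirR) :
    lift3 F (ev g Xl) = g.sum fun n r => Xl^[n] (F r) := by
  rw [ev_Xl_eq]
  unfold lift3
  refine Eq.trans (Finsupp.sum_mapRange_index (fun a => Finsupp.sum_zero_index)) ?_
  refine Finsupp.sum_congr (fun n _ => ?_)
  refine Eq.trans (Finsupp.sum_single_index Finsupp.sum_zero_index) ?_
  refine Eq.trans (Finsupp.sum_single_index (by simp [hF0, iter_zero' Xl_zero])) ?_
  simp

lemma lift3_ev_Xm (F : VirR → Pol3 VirR) (hF0 : F 0 = 0) (g : Pol1 VirR) :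
    lift3 F (ev g Xm) = g.sum fun n r => Xm^[n] (F r) := by
  rw [ev_Xm_eq]
  unfold lift3
  refine Eq.trans (Finsupp.sum_single_index Finsupp.sum_zero_index) ?_
  refine Eq.trans (Finsupp.sum_mapRange_index (fun a => Finsupp.sum_zero_index)) ?_
  refine Finsupp.sum_congr (fun n _ => ?_)
  refine Eq.trans (Finsupp.sum_single_index (by simp [hF0, iter_zero' Xm_zero])) ?_
  simp


/-! ### The evaluation `Pol3 VirR → ℂ[∂][λ]` sending `μ ↦ 0`, `γ ↦ 0`. -/

noncomputable def EA (w : Pol3 VirR) : Polynomial VirR :=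
  toP (w.mapRange (fun v => v 0 0) rfl)

@[simp] lemma EA_coeff (w : Pol3 VirR) (a : ℕ) : (EA w).coeff a = w a 0 0 := rfl

@[simp] lemma EA_zero : EA 0 = 0 := by ext n; simp

@[simp] lemma EA_add (a b : Pol3 VirR) : EA (a + b) = EA a + EA b := by
  ext n; simp

noncomputable def EAh : Pol3 VirR →+ Polynomial VirR :=
  { toFun := EA, map_zero' := EA_zero, map_add' := EA_add }

@[simp] lemma EAh_apply (w : Pol3 VirR) : EAh w = EA w := rfl

lemma EA_iota3 (r : VirR) : EA (iota3 r) = Polynomial.C r := by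
  refine Polynomial.ext fun a => ?_
  rw [EA_coeff]
  simp only [iota3, Finsupp.single_apply, Polynomial.coeff_C]
  rcases eq_or_ne a 0 with h | h <;> simp [h, eq_comm]

lemma EA_Xl (w : Pol3 VirR) : EA (Xl w) = Polynomial.X * EA w := by
  refine Polynomial.ext fun a => ?_
  cases a with
  | zero =>
      rw [EA_coeff, Polynomial.mul_coeff_zero]
      show (Finsupp.mapDomain (· + 1) w) 0 0 0 = _
      rw [mapD_zero_apply]
      simp
  | succ n =>
      rw [EA_coeff, Polynomial.coeff_X_mul, EA_coeff]
      show (Finsupp.mapDomain (· + 1) w) (n + 1) 0 0 = _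
      rw [mapD_succ_apply]

lemma EA_Xm (w : Pol3 VirR) : EA (Xm w) = 0 := by
  refine Polynomial.ext fun a => ?_
  rw [EA_coeff]
  show (Finsupp.mapDomain (· + 1) (w a)) 0 0 = _
  rw [mapD_zero_apply]
  simp

lemma EA_Xg (w : Pol3 VirR) : EA (Xg w) = 0 := by
  refine Polynomial.ext fun a => ?_
  rw [EA_coeff]
  show (Finsupp.mapDomain (· + 1) (w a 0)) 0 = _
  rw [mapD_zero_apply]
  simp

lemma EA_eLM (w : Pol3 VirR) : EA (eLM w) = Polynomial.X * EA w := by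
  show EA (Xl w + Xm w) = _
  rw [EA_add, EA_Xl, EA_Xm, add_zero]

lemma EA_iter {e : Pol3 VirR → Pol3 VirR} {u : Polynomial VirR}
    (he : ∀ z, EA (e z) = u * EA z) : ∀ n z, EA (e^[n] z) = u ^ n * EA z := by
  intro n; induction n with
  | zero => intro z; simp
  | succ m ih =>
      intro z
      rw [Function.iterate_succ_apply', he, ih, pow_succ]
      ring

lemma EA_ev {e : Pol3 VirR → Pol3 VirR} {u : Polynomial VirR}
    (he : ∀ z, EA (e z) = u * EA z) (g : Pol1 VirR) :
    EA (ev g e) = (toP g).eval₂ (Polynomial.C : VirR →+* Polynomial VirR) u := by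
  unfold ev
  rw [show EA (g.sum fun n r => e^[n] (iota3 r)) = EAh (g.sum fun n r => e^[n] (iota3 r)) from rfl]
  rw [map_finsuppSum]
  rw [Polynomial.eval₂_eq_sum, toP_sum_eq]
  refine Finsupp.sum_congr (fun n _ => ?_)
  rw [EAh_apply, EA_iter he, EA_iota3, mul_comm]

lemma toP_ev1 {e : Pol1 VirR → Pol1 VirR} {u : Polynomial VirR}
    (he : ∀ z, toP (e z) = u * toP z) (g : Pol1 VirR) :
    toP (ev1 g e) = (toP g).eval₂ (Polynomial.C : VirR →+* Polynomial VirR) u := by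
  unfold ev1
  rw [show toP (g.sum fun n r => e^[n] (Finsupp.single 0 r))
      = toPAM (g.sum fun n r => e^[n] (Finsupp.single 0 r)) from rfl]
  rw [map_finsuppSum]
  rw [Polynomial.eval₂_eq_sum, toP_sum_eq]
  refine Finsupp.sum_congr (fun n _ => ?_)
  have hiter : ∀ m z, toP (e^[m] z) = u ^ m * toP z := by
    intro m; induction m with
    | zero => intro z; simp
    | succ k ih => intro z; rw [Function.iterate_succ_apply', he, ih, pow_succ]; ring
  rw [toPAM_apply, hiter, toP_single, mul_comm]
  simp


/-! ### Conformal bilinearity of `BVir` -/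

lemma BVir_add_left (x x' y : VirR) : BVir (x + x') y = BVir x y + BVir x' y := by
  apply toP_injective
  rw [toP_add, toP_BVir, toP_BVir, toP_BVir, Polynomial.eval₂_add]
  ring

lemma BVir_add_right (x y y' : VirR) : BVir x (y + y') = BVir x y + BVir x y' := by
  apply toP_injective
  rw [toP_add, toP_BVir, toP_BVir, toP_BVir, Polynomial.eval₂_add]
  ring

lemma BVir_smul_left (c : ℂ) (x y : VirR) : BVir (c • x) y = c • BVir x y := by
  apply toP_injective
  rw [toP_smulC, toP_BVir, toP_BVir, Polynomial.smul_eq_C_mul, Polynomial.eval₂_mul,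
    Polynomial.eval₂_C]
  have : cc c = Polynomial.C (Polynomial.C c) := rfl
  rw [this]
  ring

lemma BVir_smul_right (c : ℂ) (x y : VirR) : BVir x (c • y) = c • BVir x y := by
  apply toP_injective
  rw [toP_smulC, toP_BVir, toP_BVir, Polynomial.smul_eq_C_mul, Polynomial.eval₂_mul,
    Polynomial.eval₂_C]
  have : cc c = Polynomial.C (Polynomial.C c) := rfl
  rw [this]
  ring

lemma BVir_d_left (x y : VirR) : BVir (DVir x) y = -(shift1 (BVir x y)) := by
  apply toP_injective
  rw [toP_neg, toP_shift1, toP_BVir, toP_BVir, DVir_apply, Polynomial.eval₂_mul,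
    Polynomial.eval₂_X]
  simp only [show vpl = Polynomial.X from rfl, show vpd = Polynomial.C Polynomial.X from rfl]
  ring

lemma BVir_d_right (x y : VirR) : BVir x (DVir y) = D1 DVir (BVir x y) + shift1 (BVir x y) := by
  apply toP_injective
  rw [toP_add, toP_D1, toP_shift1, toP_BVir, toP_BVir, DVir_apply, Polynomial.eval₂_mul,
    Polynomial.eval₂_X]
  simp only [show vpl = Polynomial.X from rfl, show vpd = Polynomial.C Polynomial.X from rfl]
  ring

lemma BVir_zero_left (y : VirR) : BVir 0 y = 0 := by
  apply toP_injective
  rw [toP_zero, toP_BVir, Polynomial.eval₂_zero]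
  ring

lemma BVir_zero_right (x : VirR) : BVir x 0 = 0 := by
  apply toP_injective
  rw [toP_zero, toP_BVir, Polynomial.eval₂_zero]
  ring

lemma D1_smul (t : ℂ) (g : Pol1 VirR) : D1 DVir (t • g) = t • D1 DVir g := by
  refine Finsupp.ext fun n => ?_
  rw [Finsupp.smul_apply]
  show DVir ((t • g) n) = t • DVir (g n)
  rw [Finsupp.smul_apply, map_smul]

lemma shift1_smul (t : ℂ) (g : Pol1 VirR) : shift1 (t • g) = t • shift1 g :=
  Finsupp.mapDomain_smul t g

/-! ### The key polynomial computation -/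

lemma poly_key (F : Polynomial VirR)
    (h1 : Polynomial.X * F
      = (vpd + 2 * Polynomial.X)
        * (F.eval₂ (Polynomial.eval₂RingHom cc (-Polynomial.X)) Polynomial.X))
    (h2 : F = -(F.eval₂ (Polynomial.C : VirR →+* Polynomial VirR) (-vpd - Polynomial.X))) :
    ∃ t : ℂ, F = Polynomial.C (Polynomial.C t) * (vpd + 2 * Polynomial.X) := by
  classical
  have hvpd : vpd = Polynomial.C Polynomial.X := rfl
  have hXne : (Polynomial.X : Polynomial VirR) ≠ 0 := Polynomial.X_ne_zero
  have hBne : (vpd + 2 * Polynomial.X : Polynomial VirR) ≠ 0 := by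
    intro hc
    have h0 := congrArg (fun p => Polynomial.coeff p 0) hc
    simp [hvpd, Polynomial.coeff_X_zero, two_mul, Polynomial.mul_coeff_zero] at h0
  set g₀ : Polynomial ℂ :=
    F.eval₂ (Polynomial.eval₂RingHom Polynomial.C (-Polynomial.X)) Polynomial.X with hg₀
  have hG : F.eval₂ (Polynomial.eval₂RingHom cc (-Polynomial.X)) Polynomial.X
      = Polynomial.map (Polynomial.C : ℂ →+* VirR) g₀ := by
    have hc := Polynomial.hom_eval₂ F
      (Polynomial.eval₂RingHom (Polynomial.C : ℂ →+* Polynomial ℂ) (-Polynomial.X))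
      (Polynomial.mapRingHom (Polynomial.C : ℂ →+* VirR)) Polynomial.X
    have hcomp : (Polynomial.mapRingHom (Polynomial.C : ℂ →+* VirR)).comp
        (Polynomial.eval₂RingHom (Polynomial.C : ℂ →+* Polynomial ℂ) (-Polynomial.X))
        = Polynomial.eval₂RingHom cc (-Polynomial.X) := by
      refine Polynomial.ringHom_ext (fun a => ?_) ?_
      · simp [cc]
      · simp
    rw [hcomp] at hc
    simpa using hc.symm
  rw [hG] at h1
  -- evaluate `λ := 0`
  have h10 := congrArg (Polynomial.eval (0 : VirR)) h1
  simp only [Polynomial.eval_mul, Polynomial.eval_add, Polynomial.eval_X, hvpd,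
    Polynomial.eval_C, Polynomial.eval_map, zero_mul, mul_zero, add_zero,
    Polynomial.eval₂_at_zero] at h10
  have hg00 : g₀.coeff 0 = 0 := by
    rcases mul_eq_zero.mp h10.symm with h | h
    · exact absurd h Polynomial.X_ne_zero
    · exact Polynomial.C_eq_zero.mp h
  set h : Polynomial ℂ := g₀.divX with hh
  have hg0X : g₀ = Polynomial.X * h := by
    conv_lhs => rw [← Polynomial.X_mul_divX_add g₀]
    rw [hg00]
    simp [hh]
  have hF' : F = (vpd + 2 * Polynomial.X) * Polynomial.map (Polynomial.C : ℂ →+* VirR) h := by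
    refine mul_left_cancel₀ hXne ?_
    rw [h1, hg0X, Polynomial.map_mul, Polynomial.map_X]
    ring
  -- use skew-symmetry
  have hsk : (vpd + 2 * Polynomial.X) * Polynomial.map (Polynomial.C : ℂ →+* VirR) h
      = (vpd + 2 * Polynomial.X) * h.eval₂ cc (-vpd - Polynomial.X) := by
    have h2' := h2
    rw [hF'] at h2'
    rw [Polynomial.eval₂_mul, Polynomial.eval₂_add, Polynomial.eval₂_mul,
      Polynomial.eval₂_X, Polynomial.eval₂_map] at h2'
    have hccomp : (Polynomial.C : VirR →+* Polynomial VirR).comp (Polynomial.C : ℂ →+* VirR)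
        = cc := rfl
    rw [hccomp] at h2'
    have hvc : Polynomial.eval₂ (Polynomial.C : VirR →+* Polynomial VirR)
        (-vpd - Polynomial.X) vpd = vpd := by
      rw [hvpd, Polynomial.eval₂_C]
    have h2c : Polynomial.eval₂ (Polynomial.C : VirR →+* Polynomial VirR)
        (-vpd - Polynomial.X) (2 : Polynomial VirR) = 2 := by
      have := map_ofNat (Polynomial.eval₂RingHom (Polynomial.C : VirR →+* Polynomial VirR)
        (-vpd - Polynomial.X)) 2
      simpa [Polynomial.coe_eval₂RingHom] using this
    rw [hvc, h2c] at h2'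
    exact h2'.trans (by ring)
  have hmch : Polynomial.map (Polynomial.C : ℂ →+* VirR) h
      = h.eval₂ cc (-vpd - Polynomial.X) := mul_left_cancel₀ hBne hsk
  -- evaluate `λ := 0` again
  have hm0 := congrArg (Polynomial.evalRingHom (0 : VirR)) hmch
  have hL0 : (Polynomial.evalRingHom (0 : VirR)) (Polynomial.map (Polynomial.C : ℂ →+* VirR) h)
      = Polynomial.C (h.coeff 0) := by
    show Polynomial.eval 0 (Polynomial.map (Polynomial.C : ℂ →+* VirR) h) = _
    rw [Polynomial.eval_map, Polynomial.eval₂_at_zero]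
  have hR0 : (Polynomial.evalRingHom (0 : VirR)) (h.eval₂ cc (-vpd - Polynomial.X))
      = h.eval₂ (Polynomial.C : ℂ →+* VirR) (-Polynomial.X) := by
    rw [Polynomial.hom_eval₂]
    congr 1
    · refine RingHom.ext fun c => ?_
      show Polynomial.eval 0 (cc c) = Polynomial.C c
      simp [cc]
    · show Polynomial.eval 0 (-vpd - Polynomial.X) = -Polynomial.X
      simp [hvpd]
  rw [hL0, hR0] at hm0
  -- conclude `h` is constant
  have hcomp : h.comp (-Polynomial.X) = Polynomial.C (h.coeff 0) := by
    rw [Polynomial.comp]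
    exact hm0.symm
  have hconst : h = Polynomial.C (h.coeff 0) := by
    have e1 : ((-Polynomial.X : Polynomial ℂ)).comp (-Polynomial.X) = Polynomial.X := by
      simp [Polynomial.neg_comp]
    calc h = h.comp Polynomial.X := Polynomial.comp_X.symm
      _ = (h.comp (-Polynomial.X)).comp (-Polynomial.X) := by
          rw [Polynomial.comp_assoc, e1]
      _ = (Polynomial.C (h.coeff 0)).comp (-Polynomial.X) := by rw [hcomp]
      _ = Polynomial.C (h.coeff 0) := Polynomial.C_comp
  refine ⟨h.coeff 0, ?_⟩
  conv_lhs => rw [hF', hconst]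
  rw [Polynomial.map_C]
  ring

/-- every conformal biderivation of the Virasoro Lie conformal algebra
`Vir = ℂ[∂]L` is inner: `φ_λ(x,y) = t[x_λ y]` for some `t ∈ ℂ`. -/
theorem vir_biderivation_inner (φ : VirR → VirR → Pol1 VirR)
    (hφ : IsConfBiderivation DVir BVir φ) :
    ∃ t : ℂ, ∀ x y : VirR, φ x y = t • BVir x y := by
  classical
  obtain ⟨bilin, skew, leibniz⟩ := hφ
  have hvd : vpd = Polynomial.C Polynomial.X := rfl
  have hvl : vpl = Polynomial.X := rfl
  -- `φ x 0 = 0`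
  have hφ0r : ∀ x, φ x 0 = 0 := by
    intro x
    have h := bilin.add_right x 0 0
    rw [add_zero] at h
    have h' : φ x 0 + 0 = φ x 0 + φ x 0 := by rw [add_zero]; exact h
    exact (add_left_cancel h').symm
  set f : Pol1 VirR := φ 1 1 with hfdef
  set F : Polynomial VirR := toP f with hFdef
  -- operator evaluation facts
  have heXl : ∀ z : Pol3 VirR, EA (Xl z) = Polynomial.X * EA z := EA_Xl
  have heXm : ∀ z : Pol3 VirR, EA (Xm z) = 0 * EA z := fun z => by rw [EA_Xm, zero_mul]
  have heLM : ∀ z : Pol3 VirR, EA (eLM z) = Polynomial.X * EA z := EA_eLM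
  -- zero values
  have hF10 : (fun r => ev (φ 1 r) Xl) 0 = 0 := by
    show ev (φ 1 0) Xl = 0
    rw [hφ0r, ev_zero]
  have hF20 : (fun r => ev (BVir r 1) eLM) 0 = 0 := by
    show ev (BVir 0 1) eLM = 0
    rw [BVir_zero_left, ev_zero]
  have hF30 : (fun r => ev (BVir 1 r) Xm) 0 = 0 := by
    show ev (BVir 1 0) Xm = 0
    rw [BVir_zero_right, ev_zero]
  -- `BVir 1 1` explicitly
  have hB11 : BVir 1 1 = Finsupp.single 0 Polynomial.X + Finsupp.single 1 (2 : VirR) := by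
    apply toP_injective
    rw [toP_add, toP_single, toP_single, toP_BVir]
    simp only [Polynomial.eval₂_one, one_mul]
    rw [hvd, hvl, ← Polynomial.C_mul_X_pow_eq_monomial (n := 1),
      ← Polynomial.C_mul_X_pow_eq_monomial (n := 0)]
    have h2 : (Polynomial.C (2 : VirR)) = 2 := map_ofNat Polynomial.C 2
    rw [h2, pow_one, pow_zero, mul_one]
  -- instantiate the Leibniz rule at `(L, L, L)`
  have hL := leibniz 1 1 1
  rw [lift3_ev_Xm (fun r => ev (φ 1 r) Xl) hF10 (BVir 1 1)] at hL
  rw [lift3_ev_Xl (fun r => ev (BVir r 1) eLM) hF20 (φ 1 1)] at hL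
  rw [lift3_ev_Xl (fun r => ev (BVir 1 r) Xm) hF30 (φ 1 1)] at hL
  rw [hB11] at hL
  have hsum11 : (Finsupp.single 0 Polynomial.X + Finsupp.single 1 (2 : VirR)).sum
      (fun n r => Xm^[n] (ev (φ 1 r) Xl))
      = ev (φ 1 Polynomial.X) Xl + Xm (ev (φ 1 (2 : VirR)) Xl) := by
    rw [Finsupp.sum_add_index'
      (fun n => by rw [hφ0r, ev_zero, iter_zero' Xm_zero])
      (fun n r s => by rw [bilin.add_right, ev_add Xl_zero Xl_add, iter_add' Xm_add])]
    rw [Finsupp.sum_single_index (by rw [hφ0r, ev_zero]; exact iter_zero' Xm_zero _),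
      Finsupp.sum_single_index (by rw [hφ0r, ev_zero]; exact iter_zero' Xm_zero _)]
    rfl
  rw [hsum11] at hL
  -- apply `EA` to the Leibniz identity
  have hEA := congrArg EA hL
  rw [EA_add, EA_Xm, add_zero] at hEA
  rw [EA_add] at hEA
  rw [show EA (Finsupp.sum f fun n r => Xl^[n] (ev (BVir r 1) eLM))
      = EAh (Finsupp.sum f fun n r => Xl^[n] (ev (BVir r 1) eLM)) from rfl] at hEA
  rw [show EA (Finsupp.sum f fun n r => Xl^[n] (ev (BVir 1 r) Xm))
      = EAh (Finsupp.sum f fun n r => Xl^[n] (ev (BVir 1 r) Xm)) from rfl] at hEA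
  rw [map_finsuppSum, map_finsuppSum] at hEA
  simp only [EAh_apply] at hEA
  simp only [EA_iter heXl] at hEA
  simp only [EA_ev heXl, EA_ev heXm, EA_ev heLM] at hEA
  -- identify the terms
  have hccv : ∀ r : VirR, r.eval₂ cc vpd = Polynomial.C r := by
    intro r
    have he : Polynomial.eval₂RingHom cc vpd = (Polynomial.C : VirR →+* Polynomial VirR) := by
      refine Polynomial.ringHom_ext (fun a => ?_) ?_
      · show Polynomial.eval₂ cc vpd (Polynomial.C a) = Polynomial.C (Polynomial.C a)
        rw [Polynomial.eval₂_C]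
        rfl
      · show Polynomial.eval₂ cc vpd Polynomial.X = Polynomial.C Polynomial.X
        rw [Polynomial.eval₂_X]
        rfl
    have := congrArg (fun g : VirR →+* Polynomial VirR => g r) he
    simpa [Polynomial.coe_eval₂RingHom] using this
  have hterm1 : ∀ r : VirR, (toP (BVir r 1)).eval₂
      (Polynomial.C : VirR →+* Polynomial VirR) Polynomial.X
      = r.eval₂ cc (-Polynomial.X) * (vpd + 2 * Polynomial.X) := by
    intro r
    rw [Polynomial.eval₂_C_X, toP_BVir, hvl, Polynomial.eval₂_one, mul_one]
  have hterm2 : ∀ r : VirR, (toP (BVir 1 r)).eval₂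
      (Polynomial.C : VirR →+* Polynomial VirR) 0
      = Polynomial.C r * vpd := by
    intro r
    rw [toP_BVir, Polynomial.eval₂_one, one_mul]
    rw [Polynomial.eval₂_mul]
    have hx : Polynomial.eval₂ (Polynomial.C : VirR →+* Polynomial VirR) 0 (vpd + 2 * vpl)
        = vpd := by
      rw [Polynomial.eval₂_add, Polynomial.eval₂_mul, hvd, hvl, Polynomial.eval₂_C,
        Polynomial.eval₂_X]
      have h2 : Polynomial.eval₂ (Polynomial.C : VirR →+* Polynomial VirR) 0
          (2 : Polynomial VirR) = 2 := by
        have := map_ofNat (Polynomial.eval₂RingHom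
          (Polynomial.C : VirR →+* Polynomial VirR) 0) 2
        simpa [Polynomial.coe_eval₂RingHom] using this
      rw [h2, mul_zero, add_zero]
    rw [hx]
    congr 1
    have := Polynomial.hom_eval₂ r cc
      (Polynomial.eval₂RingHom (Polynomial.C : VirR →+* Polynomial VirR) 0) (vpd + vpl)
    simp only [Polynomial.coe_eval₂RingHom] at this
    rw [this]
    have hcomp : (Polynomial.eval₂RingHom (Polynomial.C : VirR →+* Polynomial VirR) 0).comp cc
        = cc := by
      refine RingHom.ext fun c => ?_
      show Polynomial.eval₂ (Polynomial.C : VirR →+* Polynomial VirR) 0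
        (Polynomial.C (Polynomial.C c)) = cc c
      rw [Polynomial.eval₂_C]
      rfl
    have harg : Polynomial.eval₂ (Polynomial.C : VirR →+* Polynomial VirR) 0 (vpd + vpl)
        = vpd := by
      rw [Polynomial.eval₂_add, hvd, hvl, Polynomial.eval₂_C, Polynomial.eval₂_X, add_zero]
    rw [hcomp, harg, hccv]
  have hphiX : toP (φ 1 Polynomial.X)
      = Polynomial.C Polynomial.X * F + Polynomial.X * F := by
    have hd := bilin.d_right 1 1
    rw [DVir_apply, mul_one] at hd
    rw [hd, toP_add, toP_D1, toP_shift1, ← hfdef, ← hFdef]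
  simp only [hterm1, hterm2] at hEA
  simp only [Polynomial.eval₂_C_X] at hEA
  rw [hphiX] at hEA
  -- repackage the sums
  set G : Polynomial VirR := F.eval₂
    (Polynomial.eval₂RingHom cc (-Polynomial.X)) Polynomial.X with hGdef
  have hsum2 : (Finsupp.sum f fun n r
        => Polynomial.X ^ n * (r.eval₂ cc (-Polynomial.X) * (vpd + 2 * Polynomial.X)))
      = (vpd + 2 * Polynomial.X) * G := by
    rw [hGdef, Polynomial.eval₂_eq_sum, toP_sum_eq, Finsupp.mul_sum]
    refine Finsupp.sum_congr fun n _ => ?_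
    simp only [Polynomial.coe_eval₂RingHom]
    ring
  have hsum3 : (Finsupp.sum f fun n r => Polynomial.X ^ n * (Polynomial.C r * vpd))
      = vpd * F := by
    have hFex : F = F.eval₂ (Polynomial.C : VirR →+* Polynomial VirR) Polynomial.X :=
      (Polynomial.eval₂_C_X).symm
    conv_rhs => rw [hFex]
    rw [Polynomial.eval₂_eq_sum, toP_sum_eq, Finsupp.mul_sum]
    exact Finsupp.sum_congr fun n _ => by ring
  rw [hsum2, hsum3] at hEA
  -- the two functional equations
  have key1 : Polynomial.X * F = (vpd + 2 * Polynomial.X) * G := by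
    rw [hvd] at hEA ⊢
    linear_combination hEA
  have key2 : F = -(F.eval₂ (Polynomial.C : VirR →+* Polynomial VirR)
      (-vpd - Polynomial.X)) := by
    have hsub : ∀ z : Pol1 VirR, toP (subNeg DVir z) = (-vpd - Polynomial.X) * toP z := by
      intro z
      show toP (-(D1 DVir z) - shift1 z) = _
      rw [toP_sub, toP_neg, toP_D1, toP_shift1, hvd]
      ring
    have h := congrArg toP (skew 1 1)
    rw [toP_neg, toP_ev1 hsub] at h
    exact h
  obtain ⟨t, hFt⟩ := poly_key F (by rw [key1, hGdef]) key2
  refine ⟨t, ?_⟩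
  -- base case
  have base : φ 1 1 = t • BVir 1 1 := by
    apply toP_injective
    rw [toP_smulC, toP_BVir]
    simp only [Polynomial.eval₂_one, one_mul]
    rw [← hfdef, ← hFdef, hFt, hvd, hvl]
  -- inductive steps
  have stepR : ∀ x y, φ x y = t • BVir x y → φ x (DVir y) = t • BVir x (DVir y) := by
    intro x y h
    rw [bilin.d_right, h, BVir_d_right, D1_smul, shift1_smul, smul_add]
  have stepL : ∀ x y, φ x y = t • BVir x y → φ (DVir x) y = t • BVir (DVir x) y := by
    intro x y h
    rw [bilin.d_left, h, BVir_d_left, shift1_smul, smul_neg]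
  have h1y : ∀ y, φ 1 y = t • BVir 1 y := by
    have hpow : ∀ n : ℕ, φ 1 (Polynomial.X ^ n) = t • BVir 1 (Polynomial.X ^ n) := by
      intro n
      induction n with
      | zero => simpa using base
      | succ m ih =>
          have h := stepR 1 (Polynomial.X ^ m) ih
          rw [DVir_apply] at h
          rw [show (Polynomial.X : VirR) ^ (m + 1) = Polynomial.X * Polynomial.X ^ m by ring]
          exact h
    intro y
    induction y using Polynomial.induction_on' with
    | add p q hp hq => rw [bilin.add_right, BVir_add_right, hp, hq, smul_add]
    | monomial n a =>
        rw [← Polynomial.smul_X_eq_monomial, bilin.smul_right, BVir_smul_right, hpow n,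
          smul_comm]
  intro x
  induction x using Polynomial.induction_on' with
  | add p q hp hq =>
      intro y
      rw [bilin.add_left, BVir_add_left, hp, hq, smul_add]
  | monomial n a =>
      have hpow : ∀ n : ℕ, ∀ y, φ (Polynomial.X ^ n) y = t • BVir (Polynomial.X ^ n) y := by
        intro n
        induction n with
        | zero => intro y; simpa using h1y y
        | succ m ih =>
            intro y
            have h := stepL (Polynomial.X ^ m) y (ih y)
            rw [DVir_apply] at h
            rw [show (Polynomial.X : VirR) ^ (m + 1) = Polynomial.X * Polynomial.X ^ m by ring]
            exact h
      intro y
      rw [← Polynomial.smul_X_eq_monomial, bilin.smul_left, BVir_smul_left, hpow n y,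
        smul_comm]

end ConfBider
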